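/- In a multi-player perfect-information game with probabilistic transitions, countable state space, nonempty finite action sets, and bounded continuous payoff functions, for every player i the expected payoff function σ ↦ u_i(σ) is continuous on the set Σ of strategy profiles, where each Σ_i = ∏_{s : i(s)=i} A(s) carries the product topology of the finite discrete spaces A(s) and Σ = ∏_{i∈N} Σ_i carries the product topology. -/

import Mathlib

open MeasureTheory

/-- A multi-player perfect-information game with probabilistic transitions:
a set of players `N`, a state space `S` with initial state `init`, a controlling
player `ctrl s` and a nonempty finite action set `act s` for every state `s`, and
a transition probability measure `q s a` for every state `s` and action `a`.
The supports of the transition measures are mutually disjoint and every state is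
reachable from the initial state, so every state is reached from `init` via
exactly one finite history (states correspond bijectively to histories). -/
structure PGame (N S A : Type*) where
  init : S
  ctrl : S → N
  act : S → Finset A
  act_nonempty : ∀ s, (act s).Nonempty
  q : S → A → PMF S
  unique_pred : ∀ z s a s' a', a ∈ act s → a' ∈ act s' →
    z ∈ (q s a).support → z ∈ (q s' a').support → s = s' ∧ a = a'
  init_not_succ : ∀ s a, a ∈ act s → init ∉ (q s a).support
  reach : ∀ z, Relation.ReflTransGen (fun s t => ∃ a ∈ act s, t ∈ (q s a).support) init z

namespace PGame

variable {N S A : Type*} (G : PGame N S A)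

/-- A play: an infinite alternating sequence of states and actions, starting at the
initial state, choosing legal actions and moving to successor states. -/
def IsPlay (p : ℕ → S × A) : Prop :=
  (p 0).1 = G.init ∧
    ∀ m, (p m).2 ∈ G.act (p m).1 ∧ (p (m + 1)).1 ∈ (G.q (p m).1 (p m).2).support

/-- The set of plays of the game. -/
def Play : Type _ := { p : ℕ → S × A // G.IsPlay p }

/-- The set of plays carries the topology generated by the cylinder sets, i.e. the
topology induced by the product of the discrete topologies. -/
instance : TopologicalSpace G.Play :=
  letI : TopologicalSpace S := ⊥
  letI : TopologicalSpace A := ⊥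
  inferInstanceAs (TopologicalSpace { p : ℕ → S × A // G.IsPlay p })

/-- The Borel σ-algebra on plays. -/
instance : MeasurableSpace G.Play := borel G.Play

/-- A strategy of player `i`: a choice of a legal action in every state controlled
by `i`. -/
def Strat (i : N) : Type _ := { f : S → A // ∀ s, G.ctrl s = i → f s ∈ G.act s }

/-- A strategy profile. -/
def Profile : Type _ := ∀ i : N, G.Strat i

/-- The profile `σ` with player `i`'s strategy replaced by `τi`. -/
noncomputable def comb (i : N) (τi : G.Strat i) (σ : G.Profile) : G.Profile :=
  haveI := Classical.decEq N
  Function.update σ i τi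

/-- The action that profile `σ` plays in state `s`. -/
def playFun (σ : G.Profile) (s : S) : A := (σ (G.ctrl s)).1 s

/-- The cylinder set of plays agreeing with the play `p0` on the first `n`
coordinates. -/
def cylSet (p0 : G.Play) (n : ℕ) : Set G.Play := { p : G.Play | ∀ m < n, p.1 m = p0.1 m }

open Classical in
/-- `μ` is the family of Borel probability measures on plays induced by the strategy
profiles via the Ionescu–Tulcea construction applied to `q`; it is uniquely
characterized by the probabilities it assigns to the cylinder sets: actions are
chosen deterministically according to the profile and states are drawn from the
transition probabilities. -/
def IsInducedMeasure (μ : G.Profile → Measure G.Play) : Prop :=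
  (∀ σ, IsProbabilityMeasure (μ σ)) ∧
    ∀ (σ : G.Profile) (p0 : G.Play) (n : ℕ),
      μ σ (G.cylSet p0 n) =
        ∏ m ∈ Finset.range n,
          ((if (p0.1 m).2 = G.playFun σ (p0.1 m).1 then 1 else 0) *
            (if m + 1 < n then G.q (p0.1 m).1 (p0.1 m).2 ((p0.1 (m + 1)).1) else 1))

/-- Expected payoff of player `i` under the profile `σ`: the integral of `u i`
against the induced measure. -/
noncomputable def epay (μ : G.Profile → Measure G.Play) (u : N → G.Play → ℝ)
    (σ : G.Profile) (i : N) : ℝ :=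
  ∫ p, u i p ∂(μ σ)

/-- Nash equilibrium: no player can improve his expected payoff by a unilateral
deviation. -/
def IsNash (μ : G.Profile → Measure G.Play) (u : N → G.Play → ℝ) (σ : G.Profile) : Prop :=
  ∀ (i : N) (τi : G.Strat i), G.epay μ u (G.comb i τi σ) i ≤ G.epay μ u σ i

/-- Secure equilibrium: a Nash equilibrium such that no player `i` has a deviation
keeping his own expected payoff equal, making all opponents weakly worse off, and
making some opponent strictly worse off. -/
def IsSecure (μ : G.Profile → Measure G.Play) (u : N → G.Play → ℝ) (σ : G.Profile) : Prop :=
  G.IsNash μ u σ ∧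
    ¬ ∃ (i : N) (τi : G.Strat i),
        G.epay μ u (G.comb i τi σ) i = G.epay μ u σ i ∧
        (∀ j : N, j ≠ i → G.epay μ u (G.comb i τi σ) j ≤ G.epay μ u σ j) ∧
        (∃ k : N, k ≠ i ∧ G.epay μ u (G.comb i τi σ) k < G.epay μ u σ k)

/-- The strategy space `Σ_i` of player `i` carries the product topology of the
discrete (finite) action spaces. -/
instance (i : N) : TopologicalSpace (G.Strat i) :=
  letI : TopologicalSpace A := ⊥
  inferInstanceAs (TopologicalSpace { f : S → A // ∀ s, G.ctrl s = i → f s ∈ G.act s })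

/-- The space `Σ` of strategy profiles carries the product topology. -/
instance : TopologicalSpace G.Profile :=
  inferInstanceAs (TopologicalSpace (∀ i : N, G.Strat i))

end PGame

namespace EPCaux
open PGame Filter

variable {N S A : Type*} (G : PGame N S A)

instance : BorelSpace G.Play := ⟨rfl⟩

noncomputable def stSeq : ℕ → S
  | 0 => G.init
  | m + 1 => ((G.q (stSeq m) (G.act_nonempty (stSeq m)).choose).support_nonempty).choose

noncomputable def somePlay : G.Play := by
  refine ⟨fun m => (stSeq G m, (G.act_nonempty (stSeq G m)).choose), rfl, fun m => ⟨(G.act_nonempty _).choose_spec, ?_⟩⟩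
  show stSeq G (m + 1) ∈ _
  rw [stSeq]
  exact ((G.q (stSeq G m) (G.act_nonempty (stSeq G m)).choose).support_nonempty).choose_spec

instance : Nonempty G.Play := ⟨somePlay G⟩

lemma isOpen_coord (m : ℕ) (x : S × A) : IsOpen {p : G.Play | p.1 m = x} := by
  letI : TopologicalSpace S := ⊥
  letI : TopologicalSpace A := ⊥
  haveI : DiscreteTopology S := ⟨rfl⟩
  haveI : DiscreteTopology A := ⟨rfl⟩
  have hc : Continuous (fun p : G.Play => p.1 m) :=
    (continuous_apply m).comp continuous_subtype_val
  exact (isOpen_discrete {x}).preimage hc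

lemma isOpen_cylSet (p0 : G.Play) (n : ℕ) : IsOpen (G.cylSet p0 n) := by
  have : G.cylSet p0 n = ⋂ m : Fin n, {p : G.Play | p.1 m = p0.1 m} := by
    ext p
    simp only [cylSet, Set.mem_setOf_eq, Set.mem_iInter]
    exact ⟨fun h m => h m m.2, fun h m hm => h ⟨m, hm⟩⟩
  rw [this]
  exact isOpen_iInter_of_finite fun m => isOpen_coord G m _

lemma measurableSet_cylSet (p0 : G.Play) (n : ℕ) : MeasurableSet (G.cylSet p0 n) :=
  (isOpen_cylSet G p0 n).measurableSet

lemma exists_cylSet_subset_nhds {p : G.Play} {V : Set G.Play} (hV : V ∈ nhds p) :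
    ∃ n, G.cylSet p n ⊆ V := by
  letI : TopologicalSpace S := ⊥
  letI : TopologicalSpace A := ⊥
  obtain ⟨O, hOV, hO, hpO⟩ := mem_nhds_iff.1 hV
  obtain ⟨O', hO', hOeq⟩ := Topology.IsInducing.subtypeVal.isOpen_iff.1 hO
  obtain ⟨I, uu, hI, hsub⟩ := isOpen_pi_iff.1 hO' p.1 (by rw [← hOeq] at hpO; exact hpO)
  refine ⟨(I.sup id) + 1, fun q hq => ?_⟩
  have hq1 : q.1 ∈ (I : Set ℕ).pi uu := by
    intro m hm
    have hmn : m < I.sup id + 1 := Nat.lt_succ_of_le (Finset.le_sup (f := id) hm)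
    rw [hq m hmn]
    exact (hI m hm).2
  exact hOV (hOeq ▸ (show q.1 ∈ O' from hsub hq1))

/-- projection to the first `n` coordinates -/
def proj (n : ℕ) (p : G.Play) : Fin n → S × A := fun m => p.1 m

lemma proj_preimage_singleton (n : ℕ) (p0 : G.Play) :
    proj G n ⁻¹' {proj G n p0} = G.cylSet p0 n := by
  ext p
  simp only [Set.mem_preimage, Set.mem_singleton_iff, cylSet, Set.mem_setOf_eq, funext_iff]
  exact ⟨fun h m hm => h ⟨m, hm⟩, fun h m => h m m.2⟩

lemma measurableSet_proj_singleton (n : ℕ) (v : Fin n → S × A) :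
    MeasurableSet (proj G n ⁻¹' {v}) := by
  have : proj G n ⁻¹' {v} = ⋂ m : Fin n, {p : G.Play | p.1 m = v m} := by
    ext p
    simp [proj, Set.mem_preimage, funext_iff]
  rw [this]
  exact MeasurableSet.iInter fun m => (isOpen_coord G m _).measurableSet

/-- the countable alphabet of legal (state, action) pairs -/
def alpha : Set (S × A) := {x | x.2 ∈ G.act x.1}

lemma countable_alpha [Countable S] : (alpha G).Countable := by
  have : alpha G ⊆ ⋃ s : S, ({s} ×ˢ (G.act s : Set A)) := by
    rintro ⟨s, a⟩ h
    exact Set.mem_iUnion.2 ⟨s, by simp only [alpha, Set.mem_setOf_eq] at h; simpa using h⟩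
  exact Set.Countable.mono this
    (Set.countable_iUnion fun s => ((Set.finite_singleton s).prod (G.act s).finite_toSet).countable)

lemma countable_range_proj [Countable S] (n : ℕ) : (Set.range (proj G n)).Countable := by
  have h1 : Set.range (proj G n) ⊆ {v : Fin n → S × A | ∀ m, v m ∈ alpha G} := by
    rintro v ⟨p, rfl⟩ m
    exact p.2.2 m |>.1
  exact Set.Countable.mono h1 (Set.countable_pi fun _ => countable_alpha G)

lemma measurableSet_proj_preimage [Countable S] (n : ℕ) (E : Set (Fin n → S × A)) :
    MeasurableSet (proj G n ⁻¹' E) := by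
  have h1 : proj G n ⁻¹' E = proj G n ⁻¹' (E ∩ Set.range (proj G n)) := by
    ext p; simp [Set.mem_preimage]
  have h2 : proj G n ⁻¹' (E ∩ Set.range (proj G n)) =
      ⋃ v ∈ E ∩ Set.range (proj G n), proj G n ⁻¹' {v} := by
    ext p; simp
  rw [h1, h2]
  exact MeasurableSet.biUnion ((countable_range_proj G n).mono Set.inter_subset_right)
    fun v _ => measurableSet_proj_singleton G n v

lemma measurable_comp_proj [Countable S] {n : ℕ} {β : Type*} [MeasurableSpace β]
    (h : (Fin n → S × A) → β) : Measurable (fun p => h (proj G n p)) := by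
  intro E _
  exact measurableSet_proj_preimage G n (h ⁻¹' E)

/-- canonical representative of a cylinder -/
noncomputable def rep (n : ℕ) (v : Fin n → S × A) : G.Play := Function.invFun (proj G n) v

lemma proj_rep {n : ℕ} {v : Fin n → S × A} (h : ∃ p, proj G n p = v) :
    proj G n (rep G n v) = v := Function.invFun_eq h

variable (f : G.Play → ℝ) (C : ℝ)

/-- oscillation bound of `f` on the cylinder of `v`, relative to the representative -/
noncomputable def gap (n : ℕ) (v : Fin n → S × A) : ℝ :=
  sSup ((fun y => |f y - f (rep G n v)|) '' (proj G n ⁻¹' {v}))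

/-- the cylinder-oscillation function at depth `n` -/
noncomputable def osc (n : ℕ) (p : G.Play) : ℝ := gap G f n (proj G n p)

variable (hC : ∀ p, |f p| ≤ C)

section
include hC

lemma C_nonneg : 0 ≤ C := le_trans (abs_nonneg _) (hC (somePlay G))

lemma gap_bddAbove (n : ℕ) (v : Fin n → S × A) :
    ∀ r ∈ (fun y => |f y - f (rep G n v)|) '' (proj G n ⁻¹' {v}), r ≤ 2 * C := by
  rintro r ⟨y, _, rfl⟩
  calc |f y - f (rep G n v)| ≤ |f y| + |f (rep G n v)| := abs_sub _ _
    _ ≤ C + C := add_le_add (hC y) (hC _)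
    _ = 2 * C := by ring

lemma gap_nonneg (n : ℕ) (v : Fin n → S × A) : 0 ≤ gap G f n v :=
  Real.sSup_nonneg (by rintro r ⟨y, _, rfl⟩; exact abs_nonneg _)

lemma gap_le (n : ℕ) (v : Fin n → S × A) : gap G f n v ≤ 2 * C :=
  Real.sSup_le (gap_bddAbove G f C hC n v) (by linarith [C_nonneg G f C hC])

lemma abs_sub_le_gap {n : ℕ} {v : Fin n → S × A} {p : G.Play} (hp : proj G n p = v) :
    |f p - f (rep G n v)| ≤ gap G f n v :=
  le_csSup ⟨2 * C, gap_bddAbove G f C hC n v⟩ ⟨p, hp, rfl⟩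

lemma osc_nonneg (n : ℕ) (p : G.Play) : 0 ≤ osc G f n p := gap_nonneg G f C hC n _

lemma osc_le (n : ℕ) (p : G.Play) : osc G f n p ≤ 2 * C := gap_le G f C hC n _

lemma tendsto_osc (hf : Continuous f) (p : G.Play) :
    Filter.Tendsto (fun n => osc G f n p) Filter.atTop (nhds 0) := by
  rw [Metric.tendsto_atTop]
  intro ε hε
  have hcont : Continuous fun y : G.Play => |f y - f p| := (hf.sub continuous_const).abs
  have h3 : {y : G.Play | |f y - f p| < ε / 3} ∈ nhds p := by
    have hm := (hcont.continuousAt (x := p)).preimage_mem_nhds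
      (Metric.ball_mem_nhds (|f p - f p|) (by linarith : (0:ℝ) < ε/3))
    refine Filter.mem_of_superset hm ?_
    intro y hy
    simp only [Set.mem_preimage, Metric.mem_ball, Real.dist_eq, sub_self, abs_zero, sub_zero,
      abs_abs] at hy
    exact hy
  obtain ⟨n₀, hn₀⟩ := exists_cylSet_subset_nhds G h3
  refine ⟨n₀, fun n hn => ?_⟩
  have hcyl : ∀ y : G.Play, proj G n y = proj G n p → |f y - f p| < ε / 3 := by
    intro y hy
    refine hn₀ (fun m hm => ?_)
    exact congrFun hy ⟨m, lt_of_lt_of_le hm hn⟩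
  have hrep : |f (rep G n (proj G n p)) - f p| < ε / 3 :=
    hcyl _ (proj_rep G ⟨p, rfl⟩)
  have hb : osc G f n p ≤ 2 * (ε / 3) := by
    refine Real.sSup_le ?_ (by linarith)
    rintro r ⟨y, hy, rfl⟩
    have h1 := hcyl y hy
    calc |f y - f (rep G n (proj G n p))|
        ≤ |f y - f p| + |f (rep G n (proj G n p)) - f p| := by
          rw [abs_sub_comm (f (rep G n (proj G n p)))]
          exact abs_sub_le _ _ _
      _ ≤ 2 * (ε / 3) := by linarith
  have h0 : 0 ≤ osc G f n p := osc_nonneg G f C hC n p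
  rw [Real.dist_eq, sub_zero, abs_of_nonneg h0]
  linarith
  
end

section MeasurePart

variable [Countable S] (n : ℕ) (F : Finset S)

/-- good prefixes: realizable, with all states in `F` -/
def Good : Set (Fin n → S × A) :=
  {v | (∃ p, proj G n p = v) ∧ ∀ m, (v m).1 ∈ F}

/-- bad set of plays: some of the first `n` states outside `F` -/
def Bset : Set G.Play := proj G n ⁻¹' {v | ∃ m, (v m).1 ∉ F}

/-- the cylinder of a good prefix -/
def cyl (v : Good G n F) : Set G.Play := proj G n ⁻¹' {v.1}

instance : Countable (Good G n F) := by
  haveI : Countable (alpha G) := (countable_alpha G).to_subtype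
  refine Function.Injective.countable
    (f := fun v : Good G n F => fun m : Fin n => (⟨v.1 m, ?_⟩ : alpha G)) ?_
  · obtain ⟨p, hp⟩ := v.2.1
    rw [← hp]
    exact p.2.2 m |>.1
  · intro v w h
    refine Subtype.ext (funext fun m => ?_)
    exact congrArg Subtype.val (congrFun h m)

lemma measurableSet_Bset : MeasurableSet (Bset G n F) :=
  measurableSet_proj_preimage G n _

lemma measurableSet_cyl (v : Good G n F) : MeasurableSet (cyl G n F v) :=
  measurableSet_proj_singleton G n _

lemma disjoint_cyl : Pairwise (Function.onFun Disjoint (cyl G n F)) := by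
  intro v w hvw
  refine Set.disjoint_left.2 fun p hp hp' => hvw ?_
  exact Subtype.ext ((Set.mem_preimage.1 hp).symm.trans (Set.mem_preimage.1 hp'))

lemma compl_Bset_eq : (Bset G n F)ᶜ = ⋃ v : Good G n F, cyl G n F v := by
  ext p
  simp only [Bset, Set.mem_compl_iff, Set.mem_preimage, Set.mem_setOf_eq, not_exists, not_not,
    Set.mem_iUnion]
  constructor
  · intro h
    exact ⟨⟨proj G n p, ⟨p, rfl⟩, h⟩, rfl⟩
  · rintro ⟨v, hv⟩ m
    simp only [cyl, Set.mem_preimage, Set.mem_singleton_iff] at hv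
    rw [hv]
    exact v.2.2 m

variable (μ : G.Profile → Measure G.Play) (hμ : G.IsInducedMeasure μ) (σ σ' : G.Profile)
  (hagree : ∀ s ∈ F, G.playFun σ' s = G.playFun σ s)

section
include hμ hagree

lemma measure_cyl_eq (v : Good G n F) : μ σ' (cyl G n F v) = μ σ (cyl G n F v) := by
  obtain ⟨p0, hp0⟩ := v.2.1
  have hc : cyl G n F v = G.cylSet p0 n := by
    rw [cyl, ← hp0, proj_preimage_singleton]
  rw [hc, hμ.2 σ' p0 n, hμ.2 σ p0 n]
  refine Finset.prod_congr rfl fun m hm => ?_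
  have hmem : (p0.1 m).1 ∈ F := by
    have := v.2.2 ⟨m, Finset.mem_range.1 hm⟩
    rw [← hp0] at this
    exact this
  rw [hagree _ hmem]

lemma measure_compl_Bset_eq : μ σ' (Bset G n F)ᶜ = μ σ (Bset G n F)ᶜ := by
  rw [compl_Bset_eq, measure_iUnion (disjoint_cyl G n F) (measurableSet_cyl G n F),
    measure_iUnion (disjoint_cyl G n F) (measurableSet_cyl G n F)]
  exact tsum_congr fun v => measure_cyl_eq G n F μ hμ σ σ' hagree v

lemma measure_Bset_eq : μ σ' (Bset G n F) = μ σ (Bset G n F) := by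
  haveI := hμ.1 σ
  haveI := hμ.1 σ'
  have h1 := prob_compl_eq_one_sub (μ := μ σ') (measurableSet_Bset G n F).compl
  have h2 := prob_compl_eq_one_sub (μ := μ σ) (measurableSet_Bset G n F).compl
  rw [compl_compl] at h1 h2
  rw [h1, h2, measure_compl_Bset_eq G n F μ hμ σ σ' hagree]

end

set_option maxHeartbeats 1000000

section
include hμ

lemma integrable_f (hf : Continuous f) (hCf : ∀ p, |f p| ≤ C) (τ : G.Profile) :
    Integrable f (μ τ) := by
  haveI := hμ.1 τ
  exact (integrable_const C).mono' hf.measurable.aestronglyMeasurable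
    (Filter.Eventually.of_forall fun p => by simpa [Real.norm_eq_abs] using hCf p)

lemma integrable_osc (hCf : ∀ p, |f p| ≤ C) (τ : G.Profile) :
    Integrable (osc G f n) (μ τ) := by
  haveI := hμ.1 τ
  refine (integrable_const (2 * C)).mono'
    (measurable_comp_proj G (gap G f n)).aestronglyMeasurable
    (Filter.Eventually.of_forall fun p => ?_)
  rw [Real.norm_eq_abs, abs_of_nonneg (osc_nonneg G f C hCf n p)]
  exact osc_le G f C hCf n p

end

section
include hμ hagree

lemma main_est (hf : Continuous f) (hCf : ∀ p, |f p| ≤ C) :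
    |(∫ p, f p ∂(μ σ')) - ∫ p, f p ∂(μ σ)| ≤
      2 * C * (μ σ (Bset G n F)).toReal + 2 * ∫ p, osc G f n p ∂(μ σ) := by
  haveI := hμ.1 σ
  haveI := hμ.1 σ'
  have hB := measurableSet_Bset G n F
  have hIf : ∀ τ, Integrable f (μ τ) := integrable_f G f C μ hμ hf hCf
  have hIosc : Integrable (osc G f n) (μ σ) := integrable_osc G f C n μ hμ hCf σ
  have hsplit : ∀ τ : G.Profile, ∫ p, f p ∂(μ τ) =
      (∫ p in Bset G n F, f p ∂(μ τ)) + ∫ p in (Bset G n F)ᶜ, f p ∂(μ τ) :=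
    fun τ => (integral_add_compl hB (hIf τ)).symm
  have hS' : HasSum (fun v : Good G n F => ∫ p in cyl G n F v, f p ∂(μ σ'))
      (∫ p in (Bset G n F)ᶜ, f p ∂(μ σ')) := by
    rw [compl_Bset_eq]
    exact hasSum_integral_iUnion (measurableSet_cyl G n F) (disjoint_cyl G n F)
      (hIf σ').integrableOn
  have hS : HasSum (fun v : Good G n F => ∫ p in cyl G n F v, f p ∂(μ σ))
      (∫ p in (Bset G n F)ᶜ, f p ∂(μ σ)) := by
    rw [compl_Bset_eq]
    exact hasSum_integral_iUnion (measurableSet_cyl G n F) (disjoint_cyl G n F)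
      (hIf σ).integrableOn
  have hOsum : HasSum (fun v : Good G n F => ∫ p in cyl G n F v, osc G f n p ∂(μ σ))
      (∫ p in (Bset G n F)ᶜ, osc G f n p ∂(μ σ)) := by
    rw [compl_Bset_eq]
    exact hasSum_integral_iUnion (measurableSet_cyl G n F) (disjoint_cyl G n F)
      hIosc.integrableOn
  have hosc_cyl : ∀ v : Good G n F, ∫ p in cyl G n F v, osc G f n p ∂(μ σ)
      = gap G f n v.1 * (μ σ (cyl G n F v)).toReal := by
    intro v
    rw [setIntegral_congr_fun (measurableSet_cyl G n F v)
      (g := fun _ => gap G f n v.1) (fun p hp => by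
        have hp' : proj G n p = v.1 := hp
        rw [osc, hp']),
      setIntegral_const, smul_eq_mul, mul_comm, measureReal_def]
  have hkey : ∀ v : Good G n F,
      |(∫ p in cyl G n F v, f p ∂(μ σ')) - ∫ p in cyl G n F v, f p ∂(μ σ)|
        ≤ 2 * ∫ p in cyl G n F v, osc G f n p ∂(μ σ) := by
    intro v
    set K := f (rep G n v.1) with hK
    have hmeq := measure_cyl_eq G n F μ hμ σ σ' hagree v
    have hdecomp : ∀ τ : G.Profile, ∫ p in cyl G n F v, f p ∂(μ τ)
        = (∫ p in cyl G n F v, (f p - K) ∂(μ τ)) + (μ τ (cyl G n F v)).toReal * K := by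
      intro τ
      haveI := hμ.1 τ
      rw [integral_sub ((hIf τ).restrict) (integrable_const K), setIntegral_const,
        smul_eq_mul, measureReal_def]
      ring
    have hbound : ∀ τ : G.Profile, IsProbabilityMeasure (μ τ) →
        |∫ p in cyl G n F v, (f p - K) ∂(μ τ)| ≤ gap G f n v.1 * (μ τ (cyl G n F v)).toReal := by
      intro τ _
      rw [← Real.norm_eq_abs, ← measureReal_def]
      refine norm_setIntegral_le_of_norm_le_const (measure_lt_top _ _) (fun p hp => ?_)
      rw [Real.norm_eq_abs]
      exact abs_sub_le_gap G f C hCf (v := v.1) hp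
    calc |(∫ p in cyl G n F v, f p ∂(μ σ')) - ∫ p in cyl G n F v, f p ∂(μ σ)|
        = |(∫ p in cyl G n F v, (f p - K) ∂(μ σ')) - ∫ p in cyl G n F v, (f p - K) ∂(μ σ)| := by
          rw [hdecomp σ', hdecomp σ, hmeq]; congr 1; ring
      _ ≤ |∫ p in cyl G n F v, (f p - K) ∂(μ σ')| + |∫ p in cyl G n F v, (f p - K) ∂(μ σ)| :=
          abs_sub _ _
      _ ≤ gap G f n v.1 * (μ σ' (cyl G n F v)).toReal
          + gap G f n v.1 * (μ σ (cyl G n F v)).toReal :=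
          add_le_add (hbound σ' inferInstance) (hbound σ inferInstance)
      _ = 2 * ∫ p in cyl G n F v, osc G f n p ∂(μ σ) := by
          rw [hosc_cyl v, hmeq]; ring
  have h2sum : HasSum (fun v : Good G n F => 2 * ∫ p in cyl G n F v, osc G f n p ∂(μ σ))
      (2 * ∫ p in (Bset G n F)ᶜ, osc G f n p ∂(μ σ)) := hOsum.mul_left 2
  have hdsum : HasSum (fun v : Good G n F =>
      (∫ p in cyl G n F v, f p ∂(μ σ')) - ∫ p in cyl G n F v, f p ∂(μ σ))
      ((∫ p in (Bset G n F)ᶜ, f p ∂(μ σ')) - ∫ p in (Bset G n F)ᶜ, f p ∂(μ σ)) := hS'.sub hS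
  have hsummable_abs : Summable (fun v : Good G n F =>
      |(∫ p in cyl G n F v, f p ∂(μ σ')) - ∫ p in cyl G n F v, f p ∂(μ σ)|) :=
    Summable.of_nonneg_of_le (fun v => abs_nonneg _) hkey h2sum.summable
  have habs : |(∫ p in (Bset G n F)ᶜ, f p ∂(μ σ')) - ∫ p in (Bset G n F)ᶜ, f p ∂(μ σ)|
      ≤ 2 * ∫ p in (Bset G n F)ᶜ, osc G f n p ∂(μ σ) := by
    rw [← hdsum.tsum_eq, ← h2sum.tsum_eq]
    calc |∑' v : Good G n F, ((∫ p in cyl G n F v, f p ∂(μ σ')) - ∫ p in cyl G n F v, f p ∂(μ σ))|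
        ≤ ∑' v : Good G n F,
            |(∫ p in cyl G n F v, f p ∂(μ σ')) - ∫ p in cyl G n F v, f p ∂(μ σ)| := by
          have := norm_tsum_le_tsum_norm (f := fun v : Good G n F =>
            (∫ p in cyl G n F v, f p ∂(μ σ')) - ∫ p in cyl G n F v, f p ∂(μ σ))
            (by simpa [Real.norm_eq_abs] using hsummable_abs)
          simpa [Real.norm_eq_abs] using this
      _ ≤ ∑' v : Good G n F, 2 * ∫ p in cyl G n F v, osc G f n p ∂(μ σ) :=
          hsummable_abs.tsum_le_tsum hkey h2sum.summable
  have hosc_compl : ∫ p in (Bset G n F)ᶜ, osc G f n p ∂(μ σ) ≤ ∫ p, osc G f n p ∂(μ σ) :=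
    setIntegral_le_integral hIosc (Filter.Eventually.of_forall fun p => osc_nonneg G f C hCf n p)
  have hBpart : ∀ τ : G.Profile, IsProbabilityMeasure (μ τ) →
      |∫ p in Bset G n F, f p ∂(μ τ)| ≤ C * (μ τ (Bset G n F)).toReal := by
    intro τ _
    rw [← Real.norm_eq_abs, ← measureReal_def]
    exact norm_setIntegral_le_of_norm_le_const (measure_lt_top _ _)
      (fun p _ => by rw [Real.norm_eq_abs]; exact hCf p)
  have hmB := measure_Bset_eq G n F μ hμ σ σ' hagree
  calc |(∫ p, f p ∂(μ σ')) - ∫ p, f p ∂(μ σ)|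
      = |((∫ p in Bset G n F, f p ∂(μ σ')) - ∫ p in Bset G n F, f p ∂(μ σ))
          + ((∫ p in (Bset G n F)ᶜ, f p ∂(μ σ')) - ∫ p in (Bset G n F)ᶜ, f p ∂(μ σ))| := by
        rw [hsplit σ', hsplit σ]; congr 1; ring
    _ ≤ |(∫ p in Bset G n F, f p ∂(μ σ')) - ∫ p in Bset G n F, f p ∂(μ σ)|
          + |(∫ p in (Bset G n F)ᶜ, f p ∂(μ σ')) - ∫ p in (Bset G n F)ᶜ, f p ∂(μ σ)| :=
        abs_add_le _ _
    _ ≤ (|∫ p in Bset G n F, f p ∂(μ σ')| + |∫ p in Bset G n F, f p ∂(μ σ)|)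
          + 2 * ∫ p in (Bset G n F)ᶜ, osc G f n p ∂(μ σ) :=
        add_le_add (abs_sub _ _) habs
    _ ≤ (C * (μ σ' (Bset G n F)).toReal + C * (μ σ (Bset G n F)).toReal)
          + 2 * ∫ p, osc G f n p ∂(μ σ) := by
        refine add_le_add (add_le_add (hBpart σ' inferInstance) (hBpart σ inferInstance)) ?_
        linarith
    _ = 2 * C * (μ σ (Bset G n F)).toReal + 2 * ∫ p, osc G f n p ∂(μ σ) := by
        rw [hmB]; ring

end
end MeasurePart

section Final

variable [Countable S]

lemma tendsto_integral_osc (μ0 : Measure G.Play) [IsProbabilityMeasure μ0]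
    (hf : Continuous f) (hCf : ∀ p, |f p| ≤ C) :
    Filter.Tendsto (fun n => ∫ p, osc G f n p ∂μ0) Filter.atTop (nhds 0) := by
  have h := tendsto_integral_of_dominated_convergence (μ := μ0)
    (F := fun n => osc G f n) (f := fun _ => (0 : ℝ)) (fun _ => 2 * C)
    (fun n => (measurable_comp_proj G (gap G f n)).aestronglyMeasurable)
    (integrable_const _)
    (fun n => Filter.Eventually.of_forall fun p => by
      rw [Real.norm_eq_abs, abs_of_nonneg (osc_nonneg G f C hCf n p)]
      exact osc_le G f C hCf n p)
    (Filter.Eventually.of_forall fun p => tendsto_osc G f C hCf hf p)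
  simpa using h

lemma mem_Bset_iff (n : ℕ) (F : Finset S) (p : G.Play) :
    p ∈ Bset G n F ↔ ∃ m : Fin n, (proj G n p m).1 ∉ F := Iff.rfl

lemma exists_Bset_small (μ0 : Measure G.Play) [IsProbabilityMeasure μ0] (n : ℕ)
    {δ : ENNReal} (hδ : 0 < δ) : ∃ F : Finset S, μ0 (Bset G n F) < δ := by
  haveI : Nonempty S := ⟨G.init⟩
  haveI := Classical.decEq S
  obtain ⟨e, he⟩ := exists_surjective_nat S
  set Bk : ℕ → Set G.Play := fun k => Bset G n ((Finset.range (k + 1)).image e) with hBk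
  have hmeas : ∀ k, MeasurableSet (Bk k) := fun k => measurableSet_Bset G n _
  have hanti : Antitone Bk := by
    intro k k' hkk' p hp
    obtain ⟨m, hm⟩ := hp
    exact ⟨m, fun hc => hm (Finset.image_subset_image
      (Finset.range_subset_range.2 (Nat.succ_le_succ hkk')) hc)⟩
  have hempty : ⋂ k, Bk k = ∅ := by
    ext p
    simp only [Set.mem_iInter, Set.mem_empty_iff_false, iff_false, not_forall]
    by_cases hn : n = 0
    · exact ⟨0, fun h => by obtain ⟨m, _⟩ := h; exact absurd m.2 (by omega)⟩
    · set j : Fin n → ℕ := fun m => (he (proj G n p m).1).choose with hj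
      refine ⟨Finset.univ.sup j, fun h => ?_⟩
      obtain ⟨m, hm⟩ := h
      refine hm (Finset.mem_image.2 ⟨j m, Finset.mem_range.2 ?_, (he _).choose_spec⟩)
      exact Nat.lt_succ_of_le (Finset.le_sup (Finset.mem_univ m))
  have htend := tendsto_measure_iInter_atTop (μ := μ0)
    (fun k => (hmeas k).nullMeasurableSet) hanti ⟨0, measure_ne_top _ _⟩
  rw [hempty, measure_empty] at htend
  obtain ⟨k, hk⟩ := (htend.eventually_lt_const hδ).exists
  exact ⟨_, hk⟩

lemma isOpen_agree (σ : G.Profile) (F : Finset S) :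
    IsOpen {σ' : G.Profile | ∀ s ∈ F, G.playFun σ' s = G.playFun σ s} := by
  have heq : {σ' : G.Profile | ∀ s ∈ F, G.playFun σ' s = G.playFun σ s}
      = ⋂ s ∈ (F : Set S), {σ' : G.Profile | G.playFun σ' s = G.playFun σ s} := by
    ext; simp
  rw [heq]
  refine Set.Finite.isOpen_biInter F.finite_toSet fun s _ => ?_
  letI : TopologicalSpace A := ⊥
  haveI : DiscreteTopology A := ⟨rfl⟩
  have hc : Continuous fun σ' : G.Profile => G.playFun σ' s :=
    ((continuous_apply s).comp continuous_subtype_val).comp (continuous_apply (G.ctrl s))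
  exact (isOpen_discrete {G.playFun σ s}).preimage hc

end Final
end EPCaux


/-- **Continuity of the expected payoff functions** (Lemma 1): in a multi-player
perfect-information game with probabilistic transitions, countable state space,
nonempty finite action sets, and bounded continuous payoff functions, every
player's expected payoff function `σ ↦ u_i(σ)` is continuous on the space of
strategy profiles. -/
theorem expected_payoff_continuous
    {N S A : Type*} [Finite N] [Countable S]
    (hN : 2 ≤ Nat.card N)
    (G : PGame N S A) (u : N → G.Play → ℝ)
    (hu_bdd : ∀ i : N, ∃ C : ℝ, ∀ p : G.Play, |u i p| ≤ C)
    (hu_cont : ∀ i : N, Continuous (u i))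
    (μ : G.Profile → MeasureTheory.Measure G.Play)
    (hμ : G.IsInducedMeasure μ) :
    ∀ i : N, Continuous (fun σ : G.Profile => G.epay μ u σ i) := by
  intro i
  obtain ⟨C, hC⟩ := hu_bdd i
  have hC0 : 0 ≤ C := EPCaux.C_nonneg G (u i) C hC
  rw [continuous_iff_continuousAt]
  intro σ
  rw [ContinuousAt, Metric.tendsto_nhds]
  intro ε hε
  set δ : ℝ := ε / (2 * C + 3) with hδdef
  have hδ : 0 < δ := div_pos hε (by linarith)
  haveI := hμ.1 σ
  obtain ⟨n, hn⟩ := ((EPCaux.tendsto_integral_osc G (u i) C (μ σ)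
    (hu_cont i) hC).eventually_lt_const hδ).exists
  obtain ⟨F, hF⟩ := EPCaux.exists_Bset_small G (μ σ) n (ENNReal.ofReal_pos.2 hδ)
  have hFR : (μ σ (EPCaux.Bset G n F)).toReal < δ := ENNReal.toReal_lt_of_lt_ofReal hF
  refine Filter.eventually_of_mem
    ((EPCaux.isOpen_agree G σ F).mem_nhds (fun s _ => rfl)) fun σ' hσ' => ?_
  rw [Real.dist_eq]
  have hest := EPCaux.main_est G (u i) C n F μ hμ σ σ' hσ' (hu_cont i) hC
  have heps : (2 * C + 3) * δ = ε := by
    rw [hδdef, mul_comm]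
    exact div_mul_cancel₀ ε (by linarith)
  calc |G.epay μ u σ' i - G.epay μ u σ i|
      = |(∫ p, u i p ∂(μ σ')) - ∫ p, u i p ∂(μ σ)| := rfl
    _ ≤ 2 * C * (μ σ (EPCaux.Bset G n F)).toReal + 2 * ∫ p, EPCaux.osc G (u i) n p ∂(μ σ) :=
        hest
    _ ≤ 2 * C * δ + 2 * δ := by
        refine add_le_add (mul_le_mul_of_nonneg_left hFR.le (by linarith)) ?_
        linarith
    _ = (2 * C + 3) * δ - δ := by ring
    _ < (2 * C + 3) * δ := by linarith
    _ = ε := heps
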